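/- Consider a random walk on the time-varying graph sequence of Figure 1 (two stars of size n/2 connected by a single edge between their centers, with centers rotating so that after each step the previous center becomes a leaf of a newly emerged star, every node having a self-loop). Let T be the first time the walk started at the emerged left node crosses to the right half. Then E[T] ≥ 2^{(n/2)−1}. Consequently, if the reversed graph sequence of length t results in (1/4)-consensus, then t ≥ 2^{n/2}/8. -/

import Mathlib

/-- Vertices of the Figure-1 graphs: left half `Sum.inl`, right half `Sum.inr`,
each half of size `m + 2` (so `n = 2(m+2)` nodes in total, `n/2 = m + 2`). -/
abbrev FigVertex (m : ℕ) := Fin (m + 2) ⊕ Fin (m + 2)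

/-- Neighborhoods (including self-loops) of the Figure-1 graph at time `t`:
each half is a star whose center at time `t` is node `t mod (m+2)` (the centers
rotate by one each step, so the previous center becomes a leaf of the newly
emerged star), together with an edge joining the two centers, and a self-loop at
every node. -/
def figNbhd (m t : ℕ) : FigVertex m → Finset (FigVertex m) := fun v =>
  let c : Fin (m + 2) := (Fin.ofNat (m + 2) t)
  match v with
  | Sum.inl a =>
      if a = c then (Finset.univ.image Sum.inl) ∪ {Sum.inr c}
      else {Sum.inl a, Sum.inl c}
  | Sum.inr a =>
      if a = c then (Finset.univ.image Sum.inr) ∪ {Sum.inl c}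
      else {Sum.inr a, Sum.inr c}

/-- Transition matrix of the random walk on the Figure-1 graph at time `t`:
jump to a uniformly chosen neighbor (including staying put via the self-loop). -/
noncomputable def figA (m t : ℕ) : Matrix (FigVertex m) (FigVertex m) ℝ :=
  fun u v => if v ∈ figNbhd m t u then ((figNbhd m t u).card : ℝ)⁻¹ else 0

/-- Left-half substochastic restriction of the walk (transitions staying in the
left half); its `s`-step products give the probability that the walk has not yet
crossed to the right half. -/
noncomputable def figQ (m t : ℕ) : Matrix (Fin (m + 2)) (Fin (m + 2)) ℝ :=
  fun a b => figA m t (Sum.inl a) (Sum.inl b)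

open Finset Matrix
open Fin.CommRing

lemma figQ_apply (m t : ℕ) (a b : Fin (m+2)) :
    figQ m t a b =
      if a = (t : Fin (m + 2)) then ((m : ℝ)+3)⁻¹
      else if b = a ∨ b = (t : Fin (m + 2)) then (2:ℝ)⁻¹ else 0 := by
  unfold figQ figA figNbhd
  simp only [Fin.ofNat_eq_cast]
  by_cases h : a = (t : Fin (m+2))
  · simp only [h, if_true]
    rw [if_pos (by simp)]
    rw [Finset.card_union_of_disjoint (by simp), Finset.card_image_of_injective _ Sum.inl_injective]
    simp
    push_cast
    ring_nf
  · simp only [h, if_false]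
    have hc : ({Sum.inl a, Sum.inl (t : Fin (m+2))} : Finset (FigVertex m)).card = 2 := by
      rw [Finset.card_insert_of_notMem (by simp [h]), Finset.card_singleton]
    by_cases hb : b = a ∨ b = (t : Fin (m+2))
    · rw [if_pos (by simp [hb]), hc]; simp [hb]
    · rw [if_neg (by simp; push_neg at hb ⊢; exact hb)]; simp [hb]

noncomputable def uu (m s : ℕ) : Fin (m+2) → ℝ :=
  fun b => (((List.range s).map (figQ m)).prod) (Fin.last (m + 1)) b

lemma uu_zero (m : ℕ) (b : Fin (m+2)) :
    uu m 0 b = if b = Fin.last (m+1) then 1 else 0 := by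
  simp [uu, Matrix.one_apply, eq_comm]

lemma uu_succ (m s : ℕ) (b : Fin (m+2)) :
    uu m (s+1) b = ∑ a, uu m s a * figQ m s a b := by
  simp [uu, List.range_succ, Matrix.mul_apply]

lemma uu_nonneg (m s : ℕ) (b : Fin (m+2)) : 0 ≤ uu m s b := by
  induction s generalizing b with
  | zero => rw [uu_zero]; positivity
  | succ s ih =>
    rw [uu_succ]
    refine Finset.sum_nonneg fun a _ => mul_nonneg (ih a) ?_
    rw [figQ_apply]
    split_ifs <;> positivity

lemma figQ_rowsum (m t : ℕ) (a : Fin (m+2)) :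
    ∑ b, figQ m t a b =
      if a = (t : Fin (m+2)) then ((m:ℝ)+2)/((m:ℝ)+3) else 1 := by
  by_cases h : a = (t : Fin (m+2))
  · have hq : ∀ b, figQ m t a b = ((m:ℝ)+3)⁻¹ := fun b => by rw [figQ_apply, if_pos h]
    rw [Finset.sum_congr rfl (fun b _ => hq b), Finset.sum_const, Finset.card_univ]
    simp only [h, if_true, Fintype.card_fin, nsmul_eq_mul]
    have h3 : ((m:ℝ)+3) ≠ 0 := by positivity
    push_cast
    field_simp

  · simp only [h, if_false]
    have : ∀ b, figQ m t a b = if b = a ∨ b = (t : Fin (m+2)) then (2:ℝ)⁻¹ else 0 := by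
      intro b; rw [figQ_apply, if_neg h]
    rw [Finset.sum_congr rfl (fun b _ => this b)]
    have : ∀ b : Fin (m+2), (if b = a ∨ b = (t : Fin (m+2)) then (2:ℝ)⁻¹ else 0)
        = if b ∈ ({a, (t : Fin (m+2))} : Finset (Fin (m+2))) then (2:ℝ)⁻¹ else 0 := by
      intro b; simp
    rw [Finset.sum_congr rfl (fun b _ => this b), Finset.sum_ite_mem,
      Finset.univ_inter, Finset.sum_const,
      Finset.card_insert_of_notMem (by simp [h]), Finset.card_singleton]
    norm_num

noncomputable def fsum (m s : ℕ) : ℝ := ∑ b, uu m s b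

lemma fsum_succ (m s : ℕ) :
    fsum m (s+1) = fsum m s - uu m s (s : Fin (m+2)) * ((m:ℝ)+3)⁻¹ := by
  unfold fsum
  have h3 : ((m:ℝ)+3) ≠ 0 := by positivity
  rw [Finset.sum_congr rfl (fun b _ => uu_succ m s b), Finset.sum_comm]
  rw [Finset.sum_congr rfl (fun a _ => by rw [← Finset.mul_sum, figQ_rowsum])]
  have key : ∀ a : Fin (m+2), uu m s a * (if a = ((s:ℕ) : Fin (m+2)) then ((m:ℝ)+2)/((m:ℝ)+3) else 1)
      = uu m s a + (if a = ((s:ℕ) : Fin (m+2)) then uu m s a * (-((m:ℝ)+3)⁻¹) else 0) := by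
    intro a
    split_ifs with h
    · field_simp; ring
    · ring
  rw [Finset.sum_congr rfl (fun a _ => key a), Finset.sum_add_distrib,
    Finset.sum_ite_eq' Finset.univ ((s:ℕ) : Fin (m+2))]
  simp only [Finset.mem_univ, if_true]
  ring
lemma fin_pred_val (n : ℕ) (x : Fin (n+2)) (hx : x ≠ 0) : (x - 1).val + 1 = x.val := by
  have hv : x.val ≠ 0 := fun h => hx (Fin.ext h)
  have hlt := x.isLt
  rw [Fin.sub_def]
  show (n + 2 - (1 : Fin (n+2)).val + x.val) % (n+2) + 1 = x.val
  have h1 : (1 : Fin (n+2)).val = 1 := rfl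
  rw [h1]
  rw [Nat.mod_eq_sub_mod (by omega), Nat.mod_eq_of_lt (by omega)]
  omega
lemma fin_neg_one_val (n : ℕ) : ((-1 : Fin (n+2))).val = n+1 := by
  rw [Fin.neg_def]
  show (n + 2 - (1 : Fin (n+2)).val) % (n+2) = n+1
  have h1 : (1 : Fin (n+2)).val = 1 := rfl
  rw [h1, Nat.mod_eq_of_lt (by omega)]
  omega

lemma uu_succ_eq (m s : ℕ) (b : Fin (m+2)) :
    uu m (s+1) b = uu m s ((s:ℕ) : Fin (m+2)) * ((m:ℝ)+3)⁻¹ +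
      (if b = ((s:ℕ) : Fin (m+2))
        then (∑ a ∈ Finset.univ.erase ((s:ℕ):Fin (m+2)), uu m s a) * 2⁻¹
        else uu m s b * 2⁻¹) := by
  set c : Fin (m+2) := ((s:ℕ) : Fin (m+2)) with hc
  rw [uu_succ, ← Finset.add_sum_erase _ _ (Finset.mem_univ c)]
  congr 1
  · rw [figQ_apply, if_pos rfl]
  · by_cases hb : b = c
    · rw [if_pos hb, Finset.sum_mul]
      refine Finset.sum_congr rfl fun a ha => ?_
      rw [figQ_apply, if_neg (Finset.ne_of_mem_erase ha), if_pos (Or.inr hb)]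
    · rw [if_neg hb]
      have : ∀ a ∈ Finset.univ.erase c, uu m s a * figQ m s a b
          = if a = b then uu m s a * 2⁻¹ else 0 := by
        intro a ha
        rw [figQ_apply, if_neg (Finset.ne_of_mem_erase ha)]
        by_cases hab : a = b
        · rw [if_pos hab, if_pos (Or.inl hab.symm)]
        · rw [if_neg hab, if_neg (by push_neg; exact ⟨fun h => hab h.symm, hb⟩), mul_zero]
      rw [Finset.sum_congr rfl this, Finset.sum_ite_eq' _ b,
        if_pos (Finset.mem_erase.mpr ⟨hb, Finset.mem_univ b⟩)]

lemma fsum_zero (m : ℕ) : fsum m 0 = 1 := by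
  unfold fsum
  rw [Finset.sum_congr rfl (fun b _ => uu_zero m b), Finset.sum_ite_eq' _ _ (fun _ => (1:ℝ))]
  simp

lemma fsum_nonneg (m s : ℕ) : 0 ≤ fsum m s :=
  Finset.sum_nonneg fun b _ => uu_nonneg m s b

lemma fsum_le_one (m s : ℕ) : fsum m s ≤ 1 := by
  induction s with
  | zero => rw [fsum_zero]
  | succ s ih =>
    rw [fsum_succ]
    have := uu_nonneg m s ((s:ℕ) : Fin (m+2))
    have h3 : (0:ℝ) ≤ ((m:ℝ)+3)⁻¹ := by positivity
    nlinarith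

def Mn (m : ℕ) : ℕ := (m+1) * 2^(m+1) + 2

noncomputable def cc (m j : ℕ) : ℝ := (((m:ℝ)+1) * 2^j + 2) / (Mn m : ℝ)

lemma Mn_pos (m : ℕ) : (0:ℝ) < (Mn m : ℝ) := by
  have : 0 < Mn m := by unfold Mn; positivity
  exact_mod_cast this

lemma cc_nonneg (m j : ℕ) : 0 ≤ cc m j := by
  have := Mn_pos m
  unfold cc; positivity

lemma cc_le_one (m j : ℕ) (hj : j ≤ m+1) : cc m j ≤ 1 := by
  have hM := Mn_pos m
  rw [cc, div_le_one hM]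
  have h1 : ((Mn m : ℕ) : ℝ) = ((m:ℝ)+1) * 2^(m+1) + 2 := by
    unfold Mn; push_cast; ring
  rw [h1]
  have : (2:ℝ)^j ≤ 2^(m+1) := by
    apply pow_le_pow_right₀ (by norm_num) hj
  nlinarith [pow_pos (show (0:ℝ) < 2 by norm_num) j]

lemma cc_last (m : ℕ) : cc m (m+1) = 1 := by
  have hM := Mn_pos m
  rw [cc]
  rw [div_eq_one_iff_eq (ne_of_gt hM)]
  unfold Mn; push_cast; ring

lemma cc_rec (m j : ℕ) : cc m 0 * ((m:ℝ)+3)⁻¹ + cc m (j+1) * 2⁻¹ = cc m j := by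
  have hM := Mn_pos m
  have h3 : ((m:ℝ)+3) ≠ 0 := by positivity
  unfold cc
  rw [pow_succ]
  field_simp
  ring

lemma uu_le_cc (m s : ℕ) (b : Fin (m+2)) :
    uu m s b ≤ cc m (b - ((s:ℕ) : Fin (m+2))).val := by
  induction s generalizing b with
  | zero =>
    rw [uu_zero]
    by_cases hb : b = Fin.last (m+1)
    · rw [if_pos hb, hb]
      have h0 : ((0:ℕ) : Fin (m+2)) = 0 := by norm_cast
      rw [h0, sub_zero]
      have : (Fin.last (m+1)).val = m+1 := rfl
      rw [this, cc_last]
    · rw [if_neg hb]; exact cc_nonneg _ _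
  | succ s ih =>
    set c : Fin (m+2) := ((s:ℕ) : Fin (m+2)) with hc
    have hcast : ((s+1:ℕ) : Fin (m+2)) = c + 1 := by push_cast; ring
    rw [uu_succ_eq, hcast]
    by_cases hb : b = c
    · subst hb
      have hsub : c - (c+1) = -1 := by ring
      rw [hsub, fin_neg_one_val, cc_last]
      have h1 : uu m s c * ((m:ℝ)+3)⁻¹ ≤ uu m s c * 2⁻¹ := by
        apply mul_le_mul_of_nonneg_left _ (uu_nonneg m s c)
        rw [inv_le_inv₀ (by positivity) (by norm_num)]
        have : (0:ℝ) ≤ (m:ℝ) := Nat.cast_nonneg m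
        linarith
      have h2 : uu m s c + ∑ a ∈ Finset.univ.erase c, uu m s a = fsum m s := by
        rw [fsum, Finset.add_sum_erase _ _ (Finset.mem_univ c)]
      have h4 := fsum_le_one m s
      have h5 : (0:ℝ) ≤ ∑ a ∈ Finset.univ.erase c, uu m s a :=
        Finset.sum_nonneg fun a _ => uu_nonneg m s a
      rw [if_pos rfl]
      nlinarith [uu_nonneg m s c]
    · rw [if_neg hb]
      have hx : b - c ≠ 0 := sub_ne_zero.mpr hb
      have hj : (b - (c+1)).val + 1 = (b - c).val := by
        have : b - (c+1) = (b - c) - 1 := by ring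
        rw [this]
        exact fin_pred_val m (b - c) hx
      have h1 : uu m s c ≤ cc m 0 := by
        have := ih c
        rwa [sub_self, Fin.val_zero] at this
      have h2 : uu m s b ≤ cc m ((b - (c+1)).val + 1) := by rw [hj]; exact ih b
      calc uu m s c * ((m:ℝ)+3)⁻¹ + uu m s b * 2⁻¹
          ≤ cc m 0 * ((m:ℝ)+3)⁻¹ + cc m ((b - (c+1)).val + 1) * 2⁻¹ := by
            apply add_le_add
            · exact mul_le_mul_of_nonneg_right h1 (by positivity)
            · exact mul_le_mul_of_nonneg_right h2 (by norm_num)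
        _ = cc m ((b - (c+1)).val) := cc_rec m _

lemma fsum_ge (m s : ℕ) : 1 - (s:ℝ) / (Mn m : ℝ) ≤ fsum m s := by
  have hM := Mn_pos m
  induction s with
  | zero => simp [fsum_zero]
  | succ s ih =>
    rw [fsum_succ]
    have h1 : uu m s ((s:ℕ) : Fin (m+2)) * ((m:ℝ)+3)⁻¹ ≤ (Mn m : ℝ)⁻¹ := by
      have h2 : uu m s ((s:ℕ) : Fin (m+2)) ≤ cc m 0 := by
        have := uu_le_cc m s ((s:ℕ) : Fin (m+2))
        rwa [sub_self, Fin.val_zero] at this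
      have h3 : cc m 0 = ((m:ℝ)+3) / (Mn m : ℝ) := by unfold cc; norm_num; ring_nf
      have h4 : (0:ℝ) < (m:ℝ)+3 := by positivity
      calc uu m s ((s:ℕ) : Fin (m+2)) * ((m:ℝ)+3)⁻¹
          ≤ (((m:ℝ)+3) / (Mn m : ℝ)) * ((m:ℝ)+3)⁻¹ := by
            apply mul_le_mul_of_nonneg_right _ (by positivity)
            rw [← h3]; exact h2
        _ = (Mn m : ℝ)⁻¹ := by field_simp
    push_cast
    have hsplit : ((s:ℝ)+1)/(Mn m : ℝ) = (s:ℝ)/(Mn m : ℝ) + (Mn m : ℝ)⁻¹ := by ring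
    linarith

noncomputable def eps (m : ℕ) : ℝ := (4*((m:ℝ)+3))⁻¹
noncomputable def del (m : ℕ) : ℝ := eps m * ((2:ℝ)^(m+2))⁻¹
noncomputable def phi (m j : ℕ) : ℝ := 1 - eps m * ((2:ℝ)^j)⁻¹

lemma eps_pos (m : ℕ) : 0 < eps m := by unfold eps; positivity
lemma del_pos (m : ℕ) : 0 < del m := by unfold del; have := eps_pos m; positivity
lemma eps_le (m : ℕ) : eps m ≤ 12⁻¹ := by
  unfold eps
  rw [inv_le_inv₀ (by positivity) (by norm_num)]
  have : (0:ℝ) ≤ (m:ℝ) := Nat.cast_nonneg m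
  linarith
lemma del_le_eps (m : ℕ) : del m ≤ eps m := by
  unfold del
  have h := eps_pos m
  have h1 : ((2:ℝ)^(m+2))⁻¹ ≤ 1 := by
    rw [inv_le_one_iff₀]; right; exact one_le_pow₀ (by norm_num)
  nlinarith
lemma phi_le_one (m j : ℕ) : phi m j ≤ 1 := by
  unfold phi
  have := eps_pos m
  have : (0:ℝ) ≤ eps m * ((2:ℝ)^j)⁻¹ := by positivity
  linarith
lemma phi_ge (m j : ℕ) : 1 - eps m ≤ phi m j := by
  unfold phi
  have h := eps_pos m
  have h1 : ((2:ℝ)^j)⁻¹ ≤ 1 := by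
    rw [inv_le_one_iff₀]; right; exact one_le_pow₀ (by norm_num)
  nlinarith
lemma phi_nonneg (m j : ℕ) : 0 ≤ phi m j := by
  have := phi_ge m j
  have := eps_le m
  linarith
lemma phi_zero (m : ℕ) : phi m 0 = 1 - eps m := by unfold phi; norm_num

lemma C1 (m i : ℕ) : (phi m (m+1) + phi m i) * 2⁻¹ ≤ (1 - del m) * phi m (i+1) := by
  have key : (1 - del m) * phi m (i+1) - (phi m (m+1) + phi m i) * 2⁻¹
      = del m * eps m * ((2:ℝ)^(i+1))⁻¹ := by
    unfold phi del
    have h1 : ((2:ℝ)^(i+1)) ≠ 0 := by positivity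
    have h2 : ((2:ℝ)^(m+1)) ≠ 0 := by positivity
    have h3 : ((2:ℝ)^(m+2)) ≠ 0 := by positivity
    have e1 : ((2:ℝ)^(i+1)) = 2^i * 2 := by rw [pow_succ]
    have e2 : ((2:ℝ)^(m+2)) = 2^(m+1) * 2 := by rw [pow_succ]
    rw [e1, e2]
    have h4 : ((2:ℝ)^i) ≠ 0 := by positivity
    have h5 : ((2:ℝ)^(m+1)) ≠ 0 := by positivity
    field_simp
    ring
  have hpos : 0 ≤ del m * eps m * ((2:ℝ)^(i+1))⁻¹ := by
    have := del_pos m; have := eps_pos m; positivity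
  linarith

lemma C2 (m : ℕ) (X : ℝ) (hX : X ≤ (m:ℝ)+2) :
    ((m:ℝ)+3)⁻¹ * X ≤ (1 - del m) * phi m 0 := by
  have h3 : (0:ℝ) < (m:ℝ)+3 := by positivity
  have hstep : ((m:ℝ)+3)⁻¹ * X ≤ ((m:ℝ)+3)⁻¹ * ((m:ℝ)+2) :=
    mul_le_mul_of_nonneg_left hX (by positivity)
  refine hstep.trans ?_
  rw [phi_zero]
  have he : ((m:ℝ)+3) * eps m = 4⁻¹ := by
    unfold eps
    field_simp
  have hd : ((m:ℝ)+3) * del m ≤ 4⁻¹ := by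
    have h1 := del_le_eps m
    have h2 : ((m:ℝ)+3) * del m ≤ ((m:ℝ)+3) * eps m :=
      mul_le_mul_of_nonneg_left h1 (by positivity)
    linarith
  rw [inv_mul_le_iff₀ h3]
  have hde : 0 ≤ del m * eps m := le_of_lt (mul_pos (del_pos m) (eps_pos m))
  have expand : (1 - del m) * (1 - eps m) * ((m:ℝ)+3)
      = ((m:ℝ)+3) - ((m:ℝ)+3)*eps m - ((m:ℝ)+3)*del m + ((m:ℝ)+3)*(del m * eps m) := by ring
  have h6 : 0 ≤ ((m:ℝ)+3)*(del m * eps m) := by positivity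
  nlinarith

noncomputable def Phi (m s : ℕ) : ℝ :=
  ∑ a, uu m s a * phi m ((a - ((s:ℕ):Fin (m+2))).val)

lemma Phi_succ_le (m s : ℕ) : Phi m (s+1) ≤ (1 - del m) * Phi m s := by
  set c : Fin (m+2) := ((s:ℕ) : Fin (m+2)) with hcdef
  have hcast : ((s+1:ℕ) : Fin (m+2)) = c + 1 := by push_cast; ring
  set er := Finset.univ.erase c with herdef
  set U := uu m s c with hU
  set g : Fin (m+2) → ℝ := fun b => phi m ((b - (c+1)).val) with hg
  set f : Fin (m+2) → ℝ := fun b => uu m s b with hf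
  have hmlast : (c - (c+1)).val = m + 1 := by
    rw [show c - (c+1) = -1 from by ring, fin_neg_one_val]
  have hc1 : uu m (s+1) c = U * ((m:ℝ)+3)⁻¹ + (∑ a ∈ er, f a) * 2⁻¹ := by
    rw [uu_succ_eq, if_pos rfl]
  have hb1 : ∀ b ∈ er, uu m (s+1) b * g b
      = U * ((m:ℝ)+3)⁻¹ * g b + 2⁻¹ * (f b * g b) := by
    intro b hb
    rw [uu_succ_eq, if_neg (Finset.ne_of_mem_erase hb)]
    ring
  have hsplit : Phi m (s+1)
      = uu m (s+1) c * phi m (m+1) + ∑ b ∈ er, uu m (s+1) b * g b := by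
    unfold Phi
    rw [hcast, ← Finset.add_sum_erase _ _ (Finset.mem_univ c), hmlast]
  have hA : ∑ b ∈ er, uu m (s+1) b * g b
      = U * ((m:ℝ)+3)⁻¹ * (∑ b ∈ er, g b) + 2⁻¹ * (∑ b ∈ er, f b * g b) := by
    rw [Finset.sum_congr rfl hb1, Finset.sum_add_distrib, ← Finset.mul_sum, ← Finset.mul_sum]
  have key : Phi m (s+1)
      = U * ((m:ℝ)+3)⁻¹ * (phi m (m+1) + ∑ b ∈ er, g b)
        + ∑ b ∈ er, f b * ((phi m (m+1) + g b) * 2⁻¹) := by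
    rw [hsplit, hA, hc1]
    have hB : ∑ b ∈ er, f b * ((phi m (m+1) + g b) * 2⁻¹)
        = phi m (m+1) * 2⁻¹ * (∑ b ∈ er, f b) + 2⁻¹ * (∑ b ∈ er, f b * g b) := by
      rw [Finset.sum_congr rfl (fun b _ => by ring :
            ∀ b ∈ er, f b * ((phi m (m+1) + g b) * 2⁻¹)
              = phi m (m+1) * 2⁻¹ * f b + 2⁻¹ * (f b * g b)),
        Finset.sum_add_distrib, ← Finset.mul_sum, ← Finset.mul_sum]
    rw [hB]
    ring
  have hPhis : Phi m s = U * phi m 0 + ∑ b ∈ er, f b * phi m ((b - c).val) := by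
    unfold Phi
    rw [← Finset.add_sum_erase _ _ (Finset.mem_univ c), sub_self, Fin.val_zero]
  -- bound term 1
  have hS2 : (∑ b ∈ er, g b) ≤ ((m:ℝ)+1) := by
    have hcard : er.card = m + 1 := by
      rw [herdef, Finset.card_erase_of_mem (Finset.mem_univ c), Finset.card_univ,
        Fintype.card_fin]
      omega
    calc (∑ b ∈ er, g b) ≤ ∑ b ∈ er, 1 := Finset.sum_le_sum fun b _ => phi_le_one m _
      _ = ((m:ℝ)+1) := by rw [Finset.sum_const, hcard]; simp
  have ht1 : U * ((m:ℝ)+3)⁻¹ * (phi m (m+1) + ∑ b ∈ er, g b)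
      ≤ U * ((1 - del m) * phi m 0) := by
    rw [mul_assoc U]
    apply mul_le_mul_of_nonneg_left _ (uu_nonneg m s c)
    apply C2
    have := phi_le_one m (m+1)
    linarith
  have ht2 : ∑ b ∈ er, f b * ((phi m (m+1) + g b) * 2⁻¹)
      ≤ ∑ b ∈ er, f b * ((1 - del m) * phi m ((b - c).val)) := by
    apply Finset.sum_le_sum
    intro b hb
    apply mul_le_mul_of_nonneg_left _ (uu_nonneg m s b)
    have hbne : b ≠ c := Finset.ne_of_mem_erase hb
    have hj : (b - (c+1)).val + 1 = (b - c).val := by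
      rw [show b - (c+1) = (b - c) - 1 from by ring]
      exact fin_pred_val m (b - c) (sub_ne_zero.mpr hbne)
    have := C1 m ((b - (c+1)).val)
    rw [hj] at this
    exact this
  rw [key, hPhis]
  have : ∑ b ∈ er, f b * ((1 - del m) * phi m ((b - c).val))
      = (1 - del m) * ∑ b ∈ er, f b * phi m ((b - c).val) := by
    rw [Finset.mul_sum]
    exact Finset.sum_congr rfl fun b _ => by ring
  rw [this] at ht2
  nlinarith [ht1, ht2]

lemma Phi_zero_le (m : ℕ) : Phi m 0 ≤ 1 := by
  have : Phi m 0 ≤ ∑ a, uu m 0 a := by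
    apply Finset.sum_le_sum
    intro a _
    calc uu m 0 a * phi m _ ≤ uu m 0 a * 1 :=
        mul_le_mul_of_nonneg_left (phi_le_one m _) (uu_nonneg m 0 a)
      _ = uu m 0 a := mul_one _
  calc Phi m 0 ≤ ∑ a, uu m 0 a := this
    _ = fsum m 0 := rfl
    _ = 1 := fsum_zero m

lemma Phi_nonneg (m s : ℕ) : 0 ≤ Phi m s :=
  Finset.sum_nonneg fun a _ => mul_nonneg (uu_nonneg m s a) (phi_nonneg m _)

lemma del_lt_one (m : ℕ) : del m < 1 := by
  have h1 := del_le_eps m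
  have h2 := eps_le m
  linarith [show (12:ℝ)⁻¹ < 1 by norm_num]

lemma Phi_le_pow (m s : ℕ) : Phi m s ≤ (1 - del m)^s := by
  induction s with
  | zero => simpa using Phi_zero_le m
  | succ s ih =>
    calc Phi m (s+1) ≤ (1 - del m) * Phi m s := Phi_succ_le m s
      _ ≤ (1 - del m) * (1 - del m)^s := by
          apply mul_le_mul_of_nonneg_left ih
          have := del_lt_one m; have := del_pos m; linarith
      _ = (1 - del m)^(s+1) := by rw [pow_succ]; ring

lemma fsum_le_pow (m s : ℕ) : fsum m s ≤ 2 * (1 - del m)^s := by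
  have h1 : (1 - eps m) * fsum m s ≤ Phi m s := by
    unfold Phi fsum
    rw [Finset.mul_sum]
    apply Finset.sum_le_sum
    intro a _
    rw [mul_comm]
    exact mul_le_mul_of_nonneg_left (phi_ge m _) (uu_nonneg m s a)
  have h2 := Phi_le_pow m s
  have h3 := eps_le m
  have h4 := fsum_nonneg m s
  nlinarith

lemma summable_fsum (m : ℕ) : Summable (fun s => fsum m s) := by
  apply Summable.of_nonneg_of_le (fun s => fsum_nonneg m s) (fun s => fsum_le_pow m s)
  apply Summable.mul_left
  apply summable_geometric_of_lt_one
  · have := del_lt_one m; have := del_pos m; linarith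
  · have := del_pos m; linarith

lemma two_pow_le_Mn (m : ℕ) : 2^(m+2) ≤ Mn m + 1 := by
  unfold Mn
  rcases m with _ | n
  · norm_num
  · have h1 : 2^(n+1+2) = 2 * 2^(n+1+1) := by ring
    have h2 : 2 * 2^(n+1+1) ≤ (n+1+1) * 2^(n+1+1) :=
      Nat.mul_le_mul_right _ (by omega)
    omega

lemma part1 (m : ℕ) : (2:ℝ)^(m+1) ≤ ∑' s : ℕ, fsum m s := by
  have hM := Mn_pos m
  have hMn1 : 1 ≤ Mn m := by
    have : 0 < Mn m := by unfold Mn; positivity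
    omega
  have hstep1 : ∑ s ∈ Finset.range (Mn m), fsum m s ≤ ∑' s : ℕ, fsum m s :=
    Summable.sum_le_tsum _ (fun i _ => fsum_nonneg m i) (summable_fsum m)
  have hstep2 : ∑ s ∈ Finset.range (Mn m), (1 - (s:ℝ)/(Mn m : ℝ))
      ≤ ∑ s ∈ Finset.range (Mn m), fsum m s :=
    Finset.sum_le_sum fun s _ => fsum_ge m s
  have hGaussNat := Finset.sum_range_id_mul_two (Mn m)
  have hGauss : (∑ s ∈ Finset.range (Mn m), (s:ℝ)) * 2 = (Mn m : ℝ) * ((Mn m : ℝ) - 1) := by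
    have : ((∑ s ∈ Finset.range (Mn m), s : ℕ) : ℝ) * 2
        = ((Mn m * (Mn m - 1) : ℕ) : ℝ) := by exact_mod_cast congrArg (Nat.cast (R := ℝ)) hGaussNat
    push_cast [Nat.cast_sub hMn1] at this
    push_cast
    linarith
  have hsum : ∑ s ∈ Finset.range (Mn m), (1 - (s:ℝ)/(Mn m : ℝ))
      = ((Mn m : ℝ) + 1)/2 := by
    rw [Finset.sum_sub_distrib, Finset.sum_const, Finset.card_range, ← Finset.sum_div]
    have hne : (Mn m : ℝ) ≠ 0 := ne_of_gt hM
    field_simp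
    rw [nsmul_eq_mul, mul_one]
    nlinarith [hGauss]
  have hpow : (2:ℝ)^(m+2) ≤ (Mn m : ℝ) + 1 := by
    have := two_pow_le_Mn m
    exact_mod_cast this
  have h2 : (2:ℝ)^(m+2) = 2 * 2^(m+1) := by ring
  linarith [hstep1, hstep2, hsum.symm ▸ hstep2]

lemma mem_figNbhd_self (m t : ℕ) (u : FigVertex m) : u ∈ figNbhd m t u := by
  rcases u with a | a <;> unfold figNbhd <;>
    by_cases h : a = ((t:ℕ) : Fin (m+2)) <;> simp [h]

lemma figA_nonneg (m t : ℕ) (u v : FigVertex m) : 0 ≤ figA m t u v := by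
  unfold figA; split_ifs <;> positivity

lemma figA_rowsum (m t : ℕ) (u : FigVertex m) : ∑ v, figA m t u v = 1 := by
  unfold figA
  have hne : (figNbhd m t u).Nonempty := ⟨u, mem_figNbhd_self m t u⟩
  have hpos : 0 < (figNbhd m t u).card := Finset.card_pos.mpr hne
  have : ∀ v : FigVertex m, (if v ∈ figNbhd m t u then ((figNbhd m t u).card : ℝ)⁻¹ else 0)
      = if v ∈ figNbhd m t u then ((figNbhd m t u).card : ℝ)⁻¹ else 0 := fun _ => rfl
  rw [Finset.sum_ite_mem, Finset.univ_inter, Finset.sum_const, nsmul_eq_mul,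
    mul_inv_cancel₀]
  exact_mod_cast Nat.ne_zero_of_lt hpos

noncomputable def pA (m s : ℕ) : Matrix (FigVertex m) (FigVertex m) ℝ :=
  ((List.range s).map (figA m)).prod

lemma pA_succ (m s : ℕ) : pA m (s+1) = pA m s * figA m s := by
  simp [pA, List.range_succ]

lemma pA_nonneg (m s : ℕ) (u v : FigVertex m) : 0 ≤ pA m s u v := by
  induction s generalizing v with
  | zero =>
    simp only [pA, List.range_zero, List.map_nil, List.prod_nil]
    rw [Matrix.one_apply]; split_ifs <;> norm_num
  | succ s ih =>
    rw [pA_succ, Matrix.mul_apply]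
    exact Finset.sum_nonneg fun w _ => mul_nonneg (ih w) (figA_nonneg m s w v)

lemma pA_rowsum (m s : ℕ) (u : FigVertex m) : ∑ v, pA m s u v = 1 := by
  induction s with
  | zero =>
    simp only [pA, List.range_zero, List.map_nil, List.prod_nil]
    simp [Matrix.one_apply]
  | succ s ih =>
    rw [Finset.sum_congr rfl (fun v _ => by rw [pA_succ, Matrix.mul_apply]),
      Finset.sum_comm]
    rw [Finset.sum_congr rfl (fun w _ => by rw [← Finset.mul_sum, figA_rowsum, mul_one])]
    exact ih

noncomputable def pQ (m s : ℕ) : Matrix (Fin (m+2)) (Fin (m+2)) ℝ :=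
  ((List.range s).map (figQ m)).prod

lemma pQ_succ (m s : ℕ) : pQ m (s+1) = pQ m s * figQ m s := by
  simp [pQ, List.range_succ]

lemma figQ_nonneg (m t : ℕ) (a b : Fin (m+2)) : 0 ≤ figQ m t a b :=
  figA_nonneg m t (Sum.inl a) (Sum.inl b)

lemma pQ_nonneg (m s : ℕ) (a b : Fin (m+2)) : 0 ≤ pQ m s a b := by
  induction s generalizing b with
  | zero =>
    simp only [pQ, List.range_zero, List.map_nil, List.prod_nil]
    rw [Matrix.one_apply]; split_ifs <;> norm_num
  | succ s ih =>
    rw [pQ_succ, Matrix.mul_apply]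
    exact Finset.sum_nonneg fun w _ => mul_nonneg (ih w) (figQ_nonneg m s w b)

lemma pQ_le_pA (m s : ℕ) (a b : Fin (m+2)) :
    pQ m s a b ≤ pA m s (Sum.inl a) (Sum.inl b) := by
  induction s generalizing b with
  | zero =>
    simp only [pQ, pA, List.range_zero, List.map_nil, List.prod_nil]
    rw [Matrix.one_apply, Matrix.one_apply]
    by_cases h : a = b
    · rw [if_pos h, if_pos (by rw [h])]
    · rw [if_neg h, if_neg (fun hc => h (Sum.inl_injective hc))]
  | succ s ih =>
    rw [pQ_succ, pA_succ, Matrix.mul_apply, Matrix.mul_apply, Fintype.sum_sum_type]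
    have h1 : ∑ c, pQ m s a c * figQ m s c b
        ≤ ∑ c, pA m s (Sum.inl a) (Sum.inl c) * figA m s (Sum.inl c) (Sum.inl b) := by
      apply Finset.sum_le_sum
      intro c _
      exact mul_le_mul (ih c) (le_refl _) (figQ_nonneg m s c b)
        (pA_nonneg m s (Sum.inl a) (Sum.inl c))
    have h2 : (0:ℝ) ≤ ∑ r, pA m s (Sum.inl a) (Sum.inr r) * figA m s (Sum.inr r) (Sum.inl b) :=
      Finset.sum_nonneg fun r _ => mul_nonneg (pA_nonneg _ _ _ _) (figA_nonneg _ _ _ _)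
    have : ∑ c, pQ m s a c * figQ m s c b ≤
        ∑ c, pA m s (Sum.inl a) (Sum.inl c) * figA m s (Sum.inl c) (Sum.inl b)
        + ∑ r, pA m s (Sum.inl a) (Sum.inr r) * figA m s (Sum.inr r) (Sum.inl b) := by
      linarith
    exact this

lemma swap_injective (m : ℕ) : Function.Injective (Sum.swap : FigVertex m → FigVertex m) :=
  Function.Involutive.injective Sum.swap_swap

lemma figNbhd_swap (m t : ℕ) (u : FigVertex m) :
    figNbhd m t (Sum.swap u) = (figNbhd m t u).image Sum.swap := by
  have h1 : Sum.swap ∘ (Sum.inl : Fin (m+2) → FigVertex m) = Sum.inr := funext fun x => rfl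
  have h2 : Sum.swap ∘ (Sum.inr : Fin (m+2) → FigVertex m) = Sum.inl := funext fun x => rfl
  rcases u with a | a <;>
    by_cases h : a = ((t:ℕ) : Fin (m+2)) <;>
    simp [figNbhd, h, Finset.image_union, Finset.image_image, h1, h2,
      Finset.image_insert, Finset.image_singleton]

lemma figA_swap (m t : ℕ) (u v : FigVertex m) :
    figA m t (Sum.swap u) (Sum.swap v) = figA m t u v := by
  unfold figA
  rw [figNbhd_swap]
  rw [Finset.card_image_of_injective _ (swap_injective m)]
  congr 1
  simp only [eq_iff_iff]
  constructor
  · intro hmem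
    obtain ⟨w, hw, hww⟩ := Finset.mem_image.mp hmem
    rwa [← swap_injective m hww]
  · intro hmem
    exact Finset.mem_image.mpr ⟨v, hmem, rfl⟩

lemma pA_swap (m s : ℕ) (u v : FigVertex m) :
    pA m s (Sum.swap u) (Sum.swap v) = pA m s u v := by
  induction s generalizing v with
  | zero =>
    simp only [pA, List.range_zero, List.map_nil, List.prod_nil]
    rw [Matrix.one_apply, Matrix.one_apply]
    by_cases h : u = v
    · rw [if_pos h, if_pos (by rw [h])]
    · rw [if_neg h, if_neg (fun hc => h (swap_injective m hc))]
  | succ s ih =>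
    rw [pA_succ, Matrix.mul_apply, Matrix.mul_apply]
    rw [← Equiv.sum_comp (Equiv.sumComm (Fin (m+2)) (Fin (m+2)))
      (fun w => pA m s (Sum.swap u) w * figA m s w (Sum.swap v))]
    apply Finset.sum_congr rfl
    intro w _
    have he : (Equiv.sumComm (Fin (m+2)) (Fin (m+2))) w = Sum.swap w := rfl
    rw [he, ih w, figA_swap]

/-- For the random walk on the Figure-1 time-varying graph sequence,
started at the emerged left node (node `m+1`, the center of the left star at time
`-1`), the expected crossing time `E[T] = Σ_s P(T > s)` to the right half is at
least `2^{(n/2)-1} = 2^{m+1}`.  Consequently, if the reversed graph sequence of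
length `t = k·(n/2)` results in `(1/4)`-consensus — i.e. the forward product
`P = A(0)A(1)⋯A(t-1)` satisfies `S(Px) ≤ (1/4)S(x)` for all `x` — then
`t ≥ 2^{n/2}/8 = 2^{m+2}/8`. -/
theorem figure_one_exponential_lower_bound (m t k : ℕ) (ht : t = k * (m + 2)) :
    ((2 : ℝ) ^ (m + 1) ≤
      ∑' s : ℕ, ∑ b, (((List.range s).map (figQ m)).prod (Fin.last (m + 1)) b)) ∧
    ((∀ x : FigVertex m → ℝ,
        Finset.univ.sup' Finset.univ_nonempty
            ((((List.range t).map (figA m)).prod).mulVec x) -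
          Finset.univ.inf' Finset.univ_nonempty
            ((((List.range t).map (figA m)).prod).mulVec x) ≤
        (1 / 4 : ℝ) * (Finset.univ.sup' Finset.univ_nonempty x -
          Finset.univ.inf' Finset.univ_nonempty x)) →
      (2 : ℝ) ^ (m + 2) / 8 ≤ (t : ℝ)) := by
  constructor
  · exact part1 m
  · intro hcons
    set x : FigVertex m → ℝ := Sum.elim (fun _ => (0:ℝ)) (fun _ => (1:ℝ)) with hx
    have hprod : ((List.range t).map (figA m)).prod = pA m t := rfl
    have hPx : ∀ u, (pA m t).mulVec x u = ∑ b, pA m t u (Sum.inr b) := by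
      intro u
      simp [Matrix.mulVec, dotProduct, Fintype.sum_sum_type, hx]
    have hfq : fsum m t = ∑ b, pQ m t (Fin.last (m+1)) b := rfl
    have hqa : fsum m t ≤ ∑ a, pA m t (Sum.inl (Fin.last (m+1))) (Sum.inl a) := by
      rw [hfq]
      exact Finset.sum_le_sum fun a _ => pQ_le_pA m t (Fin.last (m+1)) a
    have hlow : (pA m t).mulVec x (Sum.inl (Fin.last (m+1))) ≤ 1 - fsum m t := by
      rw [hPx]
      have hrs := pA_rowsum m t (Sum.inl (Fin.last (m+1)))
      rw [Fintype.sum_sum_type] at hrs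
      linarith
    have hhigh : fsum m t ≤ (pA m t).mulVec x (Sum.inr (Fin.last (m+1))) := by
      rw [hPx]
      have hswap : ∀ b, pA m t (Sum.inr (Fin.last (m+1))) (Sum.inr b)
          = pA m t (Sum.inl (Fin.last (m+1))) (Sum.inl b) := fun b =>
        pA_swap m t (Sum.inl (Fin.last (m+1))) (Sum.inl b)
      rw [Finset.sum_congr rfl fun b _ => hswap b]
      exact hqa
    have hxle : ∀ v, x v ≤ 1 := by intro v; rcases v with a | a <;> simp [hx]
    have hxge : ∀ v, 0 ≤ x v := by intro v; rcases v with a | a <;> simp [hx]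
    have hsx : Finset.univ.sup' Finset.univ_nonempty x ≤ 1 :=
      Finset.sup'_le _ _ fun v _ => hxle v
    have hix : (0:ℝ) ≤ Finset.univ.inf' Finset.univ_nonempty x :=
      Finset.le_inf' _ _ fun v _ => hxge v
    have hcx := hcons x
    rw [hprod] at hcx
    have hs1 : (pA m t).mulVec x (Sum.inr (Fin.last (m+1)))
        ≤ Finset.univ.sup' Finset.univ_nonempty ((pA m t).mulVec x) :=
      Finset.le_sup' _ (Finset.mem_univ _)
    have hs2 : Finset.univ.inf' Finset.univ_nonempty ((pA m t).mulVec x)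
        ≤ (pA m t).mulVec x (Sum.inl (Fin.last (m+1))) :=
      Finset.inf'_le _ (Finset.mem_univ _)
    have h58 : fsum m t ≤ 5/8 := by linarith
    have hfg := fsum_ge m t
    have hM := Mn_pos m
    have htM : (3:ℝ)/8 * (Mn m : ℝ) ≤ (t:ℝ) := by
      have h38 : (3:ℝ)/8 ≤ (t:ℝ)/(Mn m : ℝ) := by linarith
      rw [div_le_div_iff₀ (by norm_num) hM] at h38
      linarith
    have hMreal : (Mn m : ℝ) = ((m:ℝ)+1)*2^(m+1)+2 := by unfold Mn; push_cast; ring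
    have hpow : (0:ℝ) ≤ (2:ℝ)^(m+1) := by positivity
    have hm0 : (0:ℝ) ≤ (m:ℝ) := Nat.cast_nonneg m
    have hfin : (2:ℝ)^(m+2)/8 ≤ (3:ℝ)/8 * (Mn m : ℝ) := by
      rw [hMreal, pow_succ]
      nlinarith [mul_nonneg hm0 hpow]
    linarith
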